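/- Let n ≥ 1 and let G = (ZMod 2)^n be the elementary abelian 2-group of order 2^n. The set of odd integers that are integer group determinants of G is exactly the set of integers congruent to 1 modulo 2^n. -/

import Mathlib

open Finset Matrix

abbrev K2 := Multiplicative (ZMod 2)
def tau : K2 := Multiplicative.ofAdd 1
lemma k2cases : ∀ k : K2, k = 1 ∨ k = tau := by decide
lemma tau_ne_one : tau ≠ 1 := by decide
lemma tau_inv : tau⁻¹ = tau := by decide
lemma tau_mul : tau * tau = 1 := by decide

/-- The group determinant of `a : G → R`: the determinant of the `|G| × |G|` matrix
whose `(g, h)` entry is `a (g * h⁻¹)`. -/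
noncomputable def groupDet {G : Type*} [Group G] [Fintype G] [DecidableEq G]
    {R : Type*} [CommRing R] (a : G → R) : R :=
  Matrix.det (Matrix.of fun g h : G => a (g * h⁻¹))

/-- The set of integer group determinants of a finite group `G`. -/
def detSet (G : Type*) [Group G] [Fintype G] [DecidableEq G] : Set ℤ :=
  {d : ℤ | ∃ a : G → ℤ, groupDet a = d}

def myconv {G : Type*} [Group G] [Fintype G] (u v : G → ℤ) : G → ℤ :=
  fun w => ∑ t, u (w * t⁻¹) * v t

lemma groupDet_conv {G : Type*} [Group G] [Fintype G] [DecidableEq G] (u v : G → ℤ) :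
    groupDet (myconv u v) = groupDet u * groupDet v := by
  unfold groupDet
  rw [← Matrix.det_mul]
  congr 1
  ext x y
  simp only [Matrix.mul_apply, Matrix.of_apply, myconv]
  rw [← Equiv.sum_comp (Equiv.mulRight y) (fun z => u (x * z⁻¹) * v (z * y⁻¹))]
  refine Finset.sum_congr rfl fun t _ => ?_
  simp [mul_assoc, _root_.mul_inv_rev]

lemma groupDet_comp_mulEquiv {G G' : Type*} [Group G] [Fintype G] [DecidableEq G]
    [Group G'] [Fintype G'] [DecidableEq G'] (e : G ≃* G') (a : G' → ℤ) :
    groupDet (a ∘ e) = groupDet a := by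
  unfold groupDet
  rw [← Matrix.det_submatrix_equiv_self e.toEquiv (Matrix.of fun g h : G' => a (g * h⁻¹))]
  congr 1
  ext x y
  simp [_root_.map_mul]

lemma det_fromBlocks_same {m : Type*} [Fintype m] [DecidableEq m] (B C : Matrix m m ℤ) :
    (Matrix.fromBlocks B C C B).det = (B + C).det * (B - C).det := by
  have h : Matrix.fromBlocks (1 : Matrix m m ℤ) 1 0 1 * Matrix.fromBlocks B C C B *
      Matrix.fromBlocks 1 (-1) 0 1 = Matrix.fromBlocks (B + C) 0 C (B - C) := by
    rw [Matrix.fromBlocks_multiply, Matrix.fromBlocks_multiply]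
    simp
    constructor <;> abel
  have := congrArg Matrix.det h
  rw [Matrix.det_mul, Matrix.det_mul, Matrix.det_fromBlocks_zero₂₁,
    Matrix.det_fromBlocks_zero₂₁, Matrix.det_fromBlocks_zero₁₂] at this
  simpa using this

def sumEquiv (H : Type*) : H ⊕ H ≃ K2 × H where
  toFun := Sum.elim (fun h => (1, h)) (fun h => (tau, h))
  invFun := fun p => if p.1 = 1 then Sum.inl p.2 else Sum.inr p.2
  left_inv := by rintro (h | h) <;> simp [tau_ne_one]
  right_inv := by
    rintro ⟨k, h⟩
    rcases k2cases k with rfl | rfl <;> simp [tau_ne_one]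

lemma groupDet_split {H : Type*} [CommGroup H] [Fintype H] [DecidableEq H]
    (a : K2 × H → ℤ) :
    groupDet a = groupDet (fun h => a (1, h) + a (tau, h)) *
      groupDet (fun h => a (1, h) - a (tau, h)) := by
  unfold groupDet
  rw [← Matrix.det_submatrix_equiv_self (sumEquiv H)
    (Matrix.of fun g h : K2 × H => a (g * h⁻¹))]
  have hsub : (Matrix.of fun g h : K2 × H => a (g * h⁻¹)).submatrix (sumEquiv H) (sumEquiv H) =
      Matrix.fromBlocks (Matrix.of fun x y : H => a (1, x * y⁻¹))
        (Matrix.of fun x y : H => a (tau, x * y⁻¹))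
        (Matrix.of fun x y : H => a (tau, x * y⁻¹))
        (Matrix.of fun x y : H => a (1, x * y⁻¹)) := by
    ext x y
    cases x <;> cases y <;>
      simp [_root_.sumEquiv, Matrix.submatrix_apply, Prod.ext_iff, tau_inv, tau_mul]
  rw [hsub, det_fromBlocks_same]
  congr 1 <;> congr 1 <;> ext x y <;> simp

def pEquiv (n : ℕ) : (Fin (n + 1) → K2) ≃* K2 × (Fin n → K2) :=
  { (Fin.consEquiv fun _ => K2).symm with map_mul' := fun _ _ => rfl }

lemma sq_one {n : ℕ} (g : Fin n → K2) : g * g = 1 := by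
  funext i
  exact (by decide : ∀ x : K2, x * x = 1) (g i)

lemma inv_self {n : ℕ} (g : Fin n → K2) : g⁻¹ = g :=
  inv_eq_of_mul_eq_one_right (sq_one g)

lemma gg_cancel {n : ℕ} (g t : Fin n → K2) : g * (g * t) = t := by
  rw [← mul_assoc, sq_one, one_mul]

lemma pair_sum {n : ℕ} (q : (Fin n → K2) → ℤ) (g : Fin n → K2) (hg : g ≠ 1)
    (hinv : ∀ t, q (g * t) = q t) : (2 : ℤ) ∣ ∑ t, q t := by
  have h0 : ((∑ t, q t : ℤ) : ZMod 2) = 0 := by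
    push_cast
    refine Finset.sum_ninvolution (fun t => g * t) (fun t => ?_) (fun t _ => ?_)
      (fun t => Finset.mem_univ _) (fun t => ?_)
    · rw [hinv t]
      exact CharTwo.add_self_eq_zero _
    · intro h
      exact hg (by simpa using congrArg (· * t⁻¹) h)
    · show g * (g * t) = t
      exact gg_cancel g t
  exact (ZMod.intCast_zmod_eq_zero_iff_dvd _ 2).mp h0

lemma pair_sum_pow {n : ℕ} (k : ℕ) (q : (Fin n → K2) → ℤ) (g : Fin n → K2) (hg : g ≠ 1)
    (hinv : ∀ t, q (g * t) = q t) (hdvd : ∀ t, (2 : ℤ) ^ k ∣ q t) :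
    (2 : ℤ) ^ (k + 1) ∣ ∑ t, q t := by
  set r : (Fin n → K2) → ℤ := fun t => q t / 2 ^ k with hr
  have hq : ∀ t, q t = 2 ^ k * r t := fun t => (Int.mul_ediv_cancel' (hdvd t)).symm
  have hrinv : ∀ t, r (g * t) = r t := by
    intro t
    simp only [hr]
    rw [hinv t]
  have h2 : (2 : ℤ) ∣ ∑ t, r t := pair_sum r g hg hrinv
  calc (2 : ℤ) ^ (k + 1) = 2 ^ k * 2 := by ring
  _ ∣ 2 ^ k * ∑ t, r t := mul_dvd_mul_left _ h2
  _ = ∑ t, q t := by rw [Finset.mul_sum]; exact Finset.sum_congr rfl fun t _ => (hq t).symm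

lemma step_lemma {n : ℕ} (k : ℕ) (d : (Fin (n + 1) → K2) → ℤ)
    (hdvd : ∀ g, g ≠ 1 → (2 : ℤ) ^ k ∣ d g) :
    ∃ f : (Fin n → K2) → ℤ, groupDet d = groupDet f ∧
      (∀ g, g ≠ 1 → (2 : ℤ) ^ (k + 1) ∣ f g) ∧ (2 : ℤ) ^ (2 * k) ∣ f 1 - (d 1) ^ 2 := by
  set e := (pEquiv n).symm with he
  set a : K2 × (Fin n → K2) → ℤ := d ∘ e with ha
  set b : (Fin n → K2) → ℤ := fun h => a (1, h) with hb
  set c : (Fin n → K2) → ℤ := fun h => a (tau, h) with hc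
  have hb1 : b 1 = d 1 := by
    show d (e (1, 1)) = d 1
    rw [show ((1, 1) : K2 × (Fin n → K2)) = 1 from rfl, _root_.map_one]
  have hbker : ∀ h : Fin n → K2, h ≠ 1 → (2 : ℤ) ^ k ∣ b h := by
    intro h hh
    refine hdvd _ fun hcontra => hh ?_
    have : (1, h) = (1 : K2 × (Fin n → K2)) := e.injective (by rw [hcontra, _root_.map_one])
    exact congrArg Prod.snd this
  have hck : ∀ h : Fin n → K2, (2 : ℤ) ^ k ∣ c h := by
    intro h
    refine hdvd _ fun hcontra => tau_ne_one ?_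
    have : (tau, h) = (1 : K2 × (Fin n → K2)) := e.injective (by rw [hcontra, _root_.map_one])
    exact congrArg Prod.fst this
  refine ⟨myconv (fun h => b h + c h) (fun h => b h - c h), ?_, ?_, ?_⟩
  · rw [show groupDet d = groupDet a from (groupDet_comp_mulEquiv e d).symm,
      groupDet_split a, groupDet_conv]
  · intro g hg
    have hfg : (myconv (fun h => b h + c h) (fun h => b h - c h)) g =
        (∑ t, (b (g * t) * b t - c (g * t) * c t)) +
        (∑ t, (c (g * t) * b t - b (g * t) * c t)) := by
      unfold myconv
      rw [← Finset.sum_add_distrib]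
      refine Finset.sum_congr rfl fun t _ => ?_
      rw [inv_self]
      ring
    have hzero : (∑ t, (c (g * t) * b t - b (g * t) * c t)) = 0 := by
      have h1 := Equiv.sum_comp (Equiv.mulLeft g)
        (fun t => c (g * t) * b t - b (g * t) * c t)
      simp only [Equiv.coe_mulLeft, gg_cancel] at h1
      have h2 : ∑ t, (c t * b (g * t) - b t * c (g * t)) =
          - ∑ t, (c (g * t) * b t - b (g * t) * c t) := by
        rw [← Finset.sum_neg_distrib]
        exact Finset.sum_congr rfl fun t _ => by ring
      rw [h2] at h1
      linarith
    rw [hfg, hzero, add_zero]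
    refine pair_sum_pow k _ g hg (fun t => ?_) (fun t => ?_)
    · rw [gg_cancel]
      ring
    · refine dvd_sub ?_ (Dvd.dvd.mul_right (hck _) _)
      by_cases ht : t = 1
      · subst ht
        exact Dvd.dvd.mul_right (hbker _ (by simpa using hg)) _
      · exact Dvd.dvd.mul_left (hbker _ ht) _
  · have hf1 : (myconv (fun h => b h + c h) (fun h => b h - c h)) 1 =
        ∑ t, (b t ^ 2 - c t ^ 2) := by
      unfold myconv
      refine Finset.sum_congr rfl fun t _ => ?_
      rw [inv_self, one_mul]
      ring
    have hsplit : (myconv (fun h => b h + c h) (fun h => b h - c h)) 1 - d 1 ^ 2 =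
        (∑ t ∈ Finset.univ.erase 1, (b t ^ 2 - c t ^ 2)) - c 1 ^ 2 := by
      rw [hf1, ← Finset.add_sum_erase _ _ (Finset.mem_univ (1 : Fin n → K2)), hb1]
      ring
    rw [hsplit]
    have h2k : (2 : ℤ) ^ (2 * k) = 2 ^ k * 2 ^ k := by ring
    refine dvd_sub (Finset.dvd_sum fun t ht => ?_) ?_
    · have htne : t ≠ 1 := (Finset.mem_erase.mp ht).1
      refine dvd_sub ?_ ?_
      · rw [h2k, sq]; exact mul_dvd_mul (hbker t htne) (hbker t htne)
      · rw [h2k, sq]; exact mul_dvd_mul (hck t) (hck t)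
    · rw [h2k, sq]; exact mul_dvd_mul (hck 1) (hck 1)
lemma pow_cong_iter (m : ℕ) (s : ℕ) (x y : ℤ) (hx : Odd x) (hy : Odd y)
    (h : (2 : ℤ) ^ s ∣ x - y) : (2 : ℤ) ^ (s + m) ∣ x ^ 2 ^ m - y ^ 2 ^ m := by
  induction m with
  | zero => simpa using h
  | succ m ih =>
    have hfact : x ^ 2 ^ (m + 1) - y ^ 2 ^ (m + 1) =
        (x ^ 2 ^ m - y ^ 2 ^ m) * (x ^ 2 ^ m + y ^ 2 ^ m) := by
      rw [pow_succ, pow_mul, pow_mul]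
      ring
    have heven : (2 : ℤ) ∣ x ^ 2 ^ m + y ^ 2 ^ m := by
      rcases hx.pow (n := 2 ^ m) with ⟨i, hi⟩
      rcases hy.pow (n := 2 ^ m) with ⟨j, hj⟩
      exact ⟨i + j + 1, by rw [hi, hj]; ring⟩
    rw [hfact, show s + (m + 1) = (s + m) + 1 from rfl, pow_succ]
    exact mul_dvd_mul ih heven

lemma pow_one_cong (m : ℕ) (x : ℤ) (hx : Odd x) : (2 : ℤ) ^ (m + 1) ∣ x ^ 2 ^ m - 1 := by
  induction m with
  | zero =>
    rcases hx with ⟨j, hj⟩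
    exact ⟨j, by rw [hj]; ring⟩
  | succ m ih =>
    have hfact : x ^ 2 ^ (m + 1) - 1 = (x ^ 2 ^ m - 1) * (x ^ 2 ^ m + 1) := by
      rw [pow_succ, pow_mul]
      ring
    have heven : (2 : ℤ) ∣ x ^ 2 ^ m + 1 := by
      rcases hx.pow (n := 2 ^ m) with ⟨i, hi⟩
      exact ⟨i + 1, by rw [hi]; ring⟩
    rw [hfact, show m + 1 + 1 = (m + 1) + 1 from rfl, pow_succ]
    exact mul_dvd_mul ih heven

lemma key_induction (n : ℕ) : ∀ k : ℕ, 1 ≤ k → ∀ d : (Fin n → K2) → ℤ, Odd (d 1) →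
    (∀ g, g ≠ 1 → (2 : ℤ) ^ k ∣ d g) →
    (2 : ℤ) ^ (n + k) ∣ groupDet d - d 1 ^ 2 ^ n := by
  induction n with
  | zero =>
    intro k hk d hodd _
    have h1 : groupDet d = d 1 := by
      unfold groupDet
      rw [Matrix.det_unique]
      simp
    rw [h1]
    simp
  | succ n ih =>
    intro k hk d hodd hdvd
    obtain ⟨f, hdet, hfdvd, hf1⟩ := step_lemma k d hdvd
    have hf1odd : Odd (f 1) := by
      obtain ⟨u, hu⟩ : (2 : ℤ) ∣ f 1 - d 1 ^ 2 :=
        dvd_trans (dvd_pow_self 2 (by omega : 2 * k ≠ 0)) hf1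
      obtain ⟨v, hv⟩ := hodd.pow (n := 2)
      exact ⟨u + v, by linarith⟩
    have ihf := ih (k + 1) (by omega) f hf1odd hfdvd
    have hpow := pow_cong_iter n (2 * k) (f 1) (d 1 ^ 2) hf1odd (hodd.pow) hf1
    have hsq : (d 1 ^ 2) ^ 2 ^ n = d 1 ^ 2 ^ (n + 1) := by
      rw [← pow_mul, pow_succ, mul_comm]
    rw [hdet]
    have heq : groupDet f - d 1 ^ 2 ^ (n + 1) =
        (groupDet f - f 1 ^ 2 ^ n) + (f 1 ^ 2 ^ n - (d 1 ^ 2) ^ 2 ^ n) := by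
      rw [hsq]; ring
    rw [heq]
    exact dvd_add (dvd_trans (pow_dvd_pow 2 (by omega : n + 1 + k ≤ n + (k + 1))) ihf)
      (dvd_trans (pow_dvd_pow 2 (by omega : n + 1 + k ≤ 2 * k + n)) hpow)

lemma two_zmod : ((2 : ℤ) : ZMod 2) = 0 := by decide

lemma odd_of_groupDet_odd {m : ℕ} (f : (Fin m → K2) → ℤ)
    (heven : ∀ g, g ≠ 1 → (2 : ℤ) ∣ f g) (hodd : Odd (groupDet f)) : Odd (f 1) := by
  have hmap : (Matrix.of fun g h : (Fin m → K2) => f (g * h⁻¹)).map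
      (Int.cast : ℤ → ZMod 2) = ((f 1 : ZMod 2)) • (1 : Matrix _ _ (ZMod 2)) := by
    ext g h
    by_cases hgh : g = h
    · subst hgh
      simp [Matrix.one_apply]
    · have h1 : g * h⁻¹ ≠ 1 := by simpa [mul_inv_eq_one] using hgh
      obtain ⟨u, hu⟩ := heven _ h1
      simp only [Matrix.map_apply, Matrix.of_apply, Matrix.smul_apply, Matrix.one_apply,
        if_neg hgh, smul_zero, hu]
      push_cast
      rw [show (2 : ZMod 2) = 0 by decide]
      ring
  have hdet : ((groupDet f : ℤ) : ZMod 2) = (f 1 : ZMod 2) ^ (2 ^ m) := by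
    unfold groupDet
    have hd := RingHom.map_det (Int.castRingHom (ZMod 2))
      (Matrix.of fun g h : (Fin m → K2) => f (g * h⁻¹))
    rw [Int.coe_castRingHom] at hd
    rw [show ((Matrix.of fun g h : (Fin m → K2) => f (g * h⁻¹)).det : ZMod 2) =
        ((Matrix.of fun g h : (Fin m → K2) => f (g * h⁻¹)).map
          (Int.cast : ℤ → ZMod 2)).det from hd,
      hmap, Matrix.smul_one_eq_diagonal, Matrix.det_diagonal]
    simp [Finset.prod_const, Fintype.card_fun]
  rcases hodd with ⟨j, hj⟩
  rw [hj] at hdet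
  have hL : ((2 * j + 1 : ℤ) : ZMod 2) = 1 := by
    push_cast
    rw [show (2 : ZMod 2) = 0 by decide]
    ring
  rw [hL] at hdet
  rw [← Int.not_even_iff_odd]
  intro hev
  have h0 : ((f 1 : ℤ) : ZMod 2) = 0 :=
    (ZMod.intCast_zmod_eq_zero_iff_dvd _ 2).mpr hev.two_dvd
  rw [h0, zero_pow (by positivity)] at hdet
  exact one_ne_zero hdet

lemma groupDet_delta {G : Type*} [Group G] [Fintype G] [DecidableEq G] :
    groupDet (fun g : G => if g = 1 then (1 : ℤ) else 0) = 1 := by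
  unfold groupDet
  have h : (Matrix.of fun g h : G => if g * h⁻¹ = 1 then (1 : ℤ) else 0) = 1 := by
    ext g h
    simp [Matrix.one_apply, mul_inv_eq_one]
  rw [h, Matrix.det_one]

lemma groupDet_delta_add {G : Type*} [Group G] [Fintype G] [DecidableEq G] (s : ℤ) :
    groupDet (fun g : G => (if g = 1 then (1 : ℤ) else 0) + s) =
      1 + (Fintype.card G : ℤ) * s := by
  unfold groupDet
  have h : (Matrix.of fun g h : G => (if g * h⁻¹ = 1 then (1 : ℤ) else 0) + s) =
      1 + Matrix.replicateCol Unit (fun _ : G => s) * Matrix.replicateRow Unit (fun _ : G => (1 : ℤ)) := by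
    ext g h
    simp [Matrix.one_apply, mul_inv_eq_one, Matrix.mul_apply]
  rw [h, Matrix.det_one_add_replicateCol_mul_replicateRow]
  simp [dotProduct, Finset.sum_const, nsmul_eq_mul, mul_comm]

theorem odd_detSet_elementary_abelian_two (n : ℕ) (hn : 1 ≤ n) :
    {N : ℤ | Odd N ∧ N ∈ detSet (Fin n → Multiplicative (ZMod 2))} =
      {N : ℤ | N ≡ 1 [ZMOD (2 ^ n)]} := by
  obtain ⟨m, rfl⟩ : ∃ m, n = m + 1 := ⟨n - 1, by omega⟩
  ext N
  simp only [Set.mem_setOf_eq]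
  constructor
  · rintro ⟨hodd, a, ha⟩
    obtain ⟨f, hdet, hfdvd, -⟩ := step_lemma 0 a (fun g _ => by simpa using one_dvd _)
    have hfeven : ∀ g, g ≠ 1 → (2 : ℤ) ∣ f g := by
      intro g hg
      simpa using hfdvd g hg
    have hNf : groupDet f = N := by rw [← hdet, ha]
    have hfodd : Odd (f 1) := odd_of_groupDet_odd f hfeven (hNf ▸ hodd)
    have h1 := key_induction m 1 le_rfl f hfodd (by simpa using hfdvd)
    have h2 := pow_one_cong m (f 1) hfodd
    have h3 : (2 : ℤ) ^ (m + 1) ∣ N - 1 := by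
      have heq : N - 1 = (groupDet f - f 1 ^ 2 ^ m) + (f 1 ^ 2 ^ m - 1) := by
        rw [hNf]; ring
      rw [heq]
      exact dvd_add h1 h2
    refine Int.ModEq.symm (Int.modEq_iff_dvd.mpr ?_)
    exact_mod_cast h3
  · intro hmod
    have h1 : ((2 : ℤ) ^ (m + 1)) ∣ N - 1 := by
      have := Int.modEq_iff_dvd.mp hmod
      rw [show (1 : ℤ) - N = -(N - 1) by ring] at this
      exact_mod_cast (dvd_neg.mp this)
    obtain ⟨t, ht⟩ := h1
    constructor
    · exact ⟨2 ^ m * t, by rw [show N = 2 ^ (m + 1) * t + 1 by linarith]; ring⟩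
    · set a0 : K2 × (Fin m → K2) → ℤ :=
        fun p => (if p = 1 then 1 else 0) + (if p.1 = 1 then t else -t) with ha0
      refine ⟨a0 ∘ (pEquiv m), ?_⟩
      rw [groupDet_comp_mulEquiv (pEquiv m) a0, groupDet_split a0]
      have hA : ∀ h : Fin m → K2, a0 (1, h) = (if h = 1 then (1 : ℤ) else 0) + t := by
        intro h
        simp [ha0, Prod.ext_iff]
      have hB : ∀ h : Fin m → K2, a0 (tau, h) = -t := by
        intro h
        simp [ha0, Prod.ext_iff, tau_ne_one]
      have hbc1 : (fun h : Fin m → K2 => a0 (1, h) + a0 (tau, h)) =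
          (fun h : Fin m → K2 => if h = 1 then (1 : ℤ) else 0) := by
        funext h
        rw [hA, hB]
        ring
      have hbc2 : (fun h : Fin m → K2 => a0 (1, h) - a0 (tau, h)) =
          (fun h : Fin m → K2 => (if h = 1 then (1 : ℤ) else 0) + 2 * t) := by
        funext h
        rw [hA, hB]
        ring
      rw [hbc1, hbc2, groupDet_delta, groupDet_delta_add, one_mul]
      have hcard : (Fintype.card (Fin m → K2) : ℤ) = 2 ^ m := by
        rw [Fintype.card_fun]
        push_cast
        norm_num
      rw [hcard]
      have hN : N = 2 ^ (m + 1) * t + 1 := by linarith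
      rw [hN]
      ring
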